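/- Let P be an odd composite number and write P - 1 = S·2^h with S odd. Then there exist T and T' with T·T' ≡ 1 (mod P) such that for every A with 1 ≤ A < P, if A is a Rabin–Miller non-witness for P, then A·T mod P is a Rabin–Miller witness for P. In particular, multiplication by T modulo P is an injective map from non-witnesses into witnesses. -/

import Mathlib

/-- `A` is a Rabin–Miller non-witness for an odd `P > 1` with `P - 1 = S·2^h` (`S` odd):
`A^S ≡ 1 (mod P)` or `A^(S·2^i) ≡ -1 (mod P)` for some `i < h`. -/
def RMNonWitness (P S h A : ℕ) : Prop :=
  A ^ S ≡ 1 [MOD P] ∨ ∃ i < h, A ^ (S * 2 ^ i) ≡ P - 1 [MOD P]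

private lemma one_add_sq_zero_pow {R : Type*} [CommRing R] (c : R) (hc : c * c = 0) :
    ∀ n : ℕ, (1 + c) ^ n = 1 + (n : R) * c := by
  intro n
  induction n with
  | zero => simp
  | succ n ih =>
    rw [pow_succ, ih]
    push_cast
    linear_combination (n : R) * hc

/-- In a `ZMod P` with `P > 2`, `-1 ≠ 1`. -/
private lemma neg_one_ne_one_zmod (m : ℕ) (hm : 2 < m) : (-1 : ZMod m) ≠ 1 := by
  intro hcon
  have h2 : ((2 : ℕ) : ZMod m) = 0 := by push_cast; linear_combination -hcon
  have := (ZMod.natCast_eq_zero_iff 2 m).mp h2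
  have := Nat.le_of_dvd (by norm_num) this
  omega

/-- For odd composite `P` with `P - 1 = S·2^h` (`S` odd) there exist `T, T'`
with `T·T' ≡ 1 (mod P)` mapping each non-witness `A` (via `A·T mod P`) to a witness;
this map is injective. -/
theorem stmt_9 (P S h : ℕ) (hodd : Odd P) (hP : 1 < P) (hnp : ¬ P.Prime)
    (hfact : P - 1 = S * 2 ^ h) (hS : Odd S) :
    ∃ T T' : ℕ, T * T' ≡ 1 [MOD P] ∧
      (∀ A : ℕ, 1 ≤ A → A < P → RMNonWitness P S h A →
        ¬ RMNonWitness P S h (A * T % P)) ∧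
      (∀ A B : ℕ, 1 ≤ A → A < P → 1 ≤ B → B < P →
        A * T % P = B * T % P → A = B) := by
  classical
  haveI : NeZero P := ⟨by omega⟩
  have hP3 : 3 ≤ P := by
    rcases hodd with ⟨k, hk⟩; omega
  -- cast of P - 1 is -1
  have hPm1 : ((P - 1 : ℕ) : ZMod P) = -1 := by
    have : ((P - 1 : ℕ) : ZMod P) = (P : ZMod P) - 1 := by
      rw [Nat.cast_sub hP.le]; norm_num
    rw [this, ZMod.natCast_self]; ring
  -- translate RMNonWitness into ZMod P
  have hiff : ∀ A : ℕ, RMNonWitness P S h A ↔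
      ((A : ZMod P) ^ S = 1 ∨ ∃ i < h, (A : ZMod P) ^ (S * 2 ^ i) = -1) := by
    intro A
    unfold RMNonWitness
    constructor
    · rintro (h1 | ⟨i, hi, h2⟩)
      · left
        have := (ZMod.natCast_eq_natCast_iff _ _ _).mpr h1
        push_cast at this; exact this
      · right; exact ⟨i, hi, by
          have := (ZMod.natCast_eq_natCast_iff _ _ _).mpr h2
          push_cast at this
          rw [this, hPm1]⟩
    · rintro (h1 | ⟨i, hi, h2⟩)
      · left
        apply (ZMod.natCast_eq_natCast_iff _ _ _).mp
        push_cast; exact h1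
      · right; exact ⟨i, hi, by
          apply (ZMod.natCast_eq_natCast_iff _ _ _).mp
          push_cast
          rw [h2, hPm1]⟩
  have hS0 : S ≠ 0 := by rintro rfl; simp at hS
  have hh1 : 1 ≤ h := by
    by_contra hcon
    have : h = 0 := by omega
    subst this
    simp at hfact
    rcases hodd with ⟨k, hk⟩
    rcases hS with ⟨m, hm⟩
    omega
  -- non-witnesses (in ZMod form) satisfy x ^ (P-1) = 1
  have hL2 : ∀ x : ZMod P,
      (x ^ S = 1 ∨ ∃ i < h, x ^ (S * 2 ^ i) = -1) → x ^ (S * 2 ^ h) = 1 := by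
    rintro x (h1 | ⟨i, hi, h2⟩)
    · rw [pow_mul, h1, one_pow]
    · have hsplit : S * 2 ^ h = S * 2 ^ i * 2 ^ (h - i) := by
        rw [mul_assoc, ← pow_add]
        congr 2
        omega
      rw [hsplit, pow_mul, h2]
      have hev : Even (2 ^ (h - i)) := (Nat.even_pow).mpr ⟨even_two, by omega⟩
      exact hev.neg_one_pow
  -- It suffices to produce a suitable unit t : ZMod P
  suffices hsuff : ∃ t : ZMod P, IsUnit t ∧ ∀ x : ZMod P,
      (x ^ S = 1 ∨ ∃ i < h, x ^ (S * 2 ^ i) = -1) →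
      ¬ ((x * t) ^ S = 1 ∨ ∃ i < h, (x * t) ^ (S * 2 ^ i) = -1) by
    obtain ⟨t, htu, hmap⟩ := hsuff
    obtain ⟨u, hu⟩ := htu
    refine ⟨t.val, ((u⁻¹ : (ZMod P)ˣ) : ZMod P).val, ?_, ?_, ?_⟩
    · apply (ZMod.natCast_eq_natCast_iff _ _ _).mp
      push_cast
      rw [ZMod.natCast_val, ZMod.cast_id, ZMod.natCast_val, ZMod.cast_id, ← hu]
      exact_mod_cast u.mul_inv
    · intro A _ _ hA hcon
      have hA' := (hiff A).mp hA
      have hcon' := (hiff _).mp hcon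
      have hcast : ((A * t.val % P : ℕ) : ZMod P) = (A : ZMod P) * t := by
        have h1 : ((A * t.val % P : ℕ) : ZMod P) = ((A * t.val : ℕ) : ZMod P) :=
          (ZMod.natCast_eq_natCast_iff _ _ _).mpr (Nat.mod_modEq _ _)
        rw [h1]
        push_cast
        rw [ZMod.natCast_val, ZMod.cast_id]
      rw [hcast] at hcon'
      exact hmap _ hA' hcon'
    · intro A B hA1 hA2 hB1 hB2 heq
      have : ((A * t.val % P : ℕ) : ZMod P) = ((B * t.val % P : ℕ) : ZMod P) := by rw [heq]
      have hAB : (A : ZMod P) * t = (B : ZMod P) * t := by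
        have h1 : ((A * t.val % P : ℕ) : ZMod P) = (A : ZMod P) * t := by
          rw [(ZMod.natCast_eq_natCast_iff _ _ _).mpr (Nat.mod_modEq _ _)]
          push_cast; rw [ZMod.natCast_val, ZMod.cast_id]
        have h2 : ((B * t.val % P : ℕ) : ZMod P) = (B : ZMod P) * t := by
          rw [(ZMod.natCast_eq_natCast_iff _ _ _).mpr (Nat.mod_modEq _ _)]
          push_cast; rw [ZMod.natCast_val, ZMod.cast_id]
        rw [← h1, ← h2, this]
      have : (A : ZMod P) = (B : ZMod P) := by
        have := congrArg (· * ((u⁻¹ : (ZMod P)ˣ) : ZMod P)) hAB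
        simpa [mul_assoc, ← hu, u.mul_inv] using this
      have := (ZMod.natCast_eq_natCast_iff _ _ _).mp this
      unfold Nat.ModEq at this
      rwa [Nat.mod_eq_of_lt hA2, Nat.mod_eq_of_lt hB2] at this
  -- Now construct t, by cases on squarefreeness.
  by_cases hsf : Squarefree P
  · -- squarefree case: CRT construction
    set p := P.minFac with hp_def
    have hpprime : p.Prime := Nat.minFac_prime (by omega)
    have hpdvd : p ∣ P := Nat.minFac_dvd P
    set Q := P / p with hQ_def
    have hPQ : P = p * Q := (Nat.mul_div_cancel' hpdvd).symm
    have hp2 : 2 ≤ p := hpprime.two_le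
    have hpodd : p ≠ 2 := by
      intro hcon
      have h2 : 2 ∣ P := hcon ▸ hpdvd
      rcases h2 with ⟨c, hc⟩
      rcases hodd with ⟨k, hk⟩
      omega
    have hp3 : 3 ≤ p := by omega
    have hQ1 : 1 < Q := by
      rcases Nat.eq_zero_or_pos Q with h0 | h0
      · exfalso; rw [h0, mul_zero] at hPQ; omega
      rcases Nat.eq_or_lt_of_le h0 with h1 | h1
      · exfalso
        apply hnp
        have hq1 : Q = 1 := h1.symm
        rw [hPQ, hq1, mul_one]
        exact hpprime
      · exact h1
    have hQodd : Odd Q := by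
      rcases Nat.even_or_odd Q with hev | hod
      · exfalso
        have hevP : Even P := by rw [hPQ]; exact hev.mul_left p
        exact (Nat.not_odd_iff_even.mpr hevP) hodd
      · exact hod
    have hQ3 : 3 ≤ Q := by
      rcases hQodd with ⟨k, hk⟩; omega
    have cop : Nat.Coprime p Q := by
      rw [hpprime.coprime_iff_not_dvd]
      intro hdvd
      obtain ⟨c, hc⟩ := hdvd
      have hppd : p * p ∣ P := ⟨c, by rw [hPQ, hc]; ring⟩
      exact hpprime.one_lt.ne' (Nat.isUnit_iff.mp (hsf p hppd))
    -- maximal j with an element of (S*2^j)-th power -1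
    set Pr : ℕ → Prop := fun i => ∃ a : ZMod P, a ^ (S * 2 ^ i) = -1 with hPr
    have hPr0 : Pr 0 := ⟨-1, by rw [pow_zero, mul_one]; exact hS.neg_one_pow⟩
    set j := Nat.findGreatest Pr (h - 1) with hj_def
    have hjspec : Pr j := Nat.findGreatest_spec (Nat.zero_le _) hPr0
    have hjh : j < h := lt_of_le_of_lt (Nat.findGreatest_le _) (by omega)
    have hjmax : ∀ i, j < i → i < h → ¬ Pr i := fun i h1 h2 =>
      Nat.findGreatest_is_greatest h1 (by omega)
    set e := S * 2 ^ j with he_def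
    -- every non-witness y satisfies y^e = ±1
    have hL3 : ∀ y : ZMod P,
        (y ^ S = 1 ∨ ∃ i < h, y ^ (S * 2 ^ i) = -1) → y ^ e = 1 ∨ y ^ e = -1 := by
      rintro y (h1 | ⟨i, hi, h2⟩)
      · left; rw [he_def, pow_mul, h1, one_pow]
      · rcases Nat.lt_trichotomy i j with hij | hij | hij
        · left
          have hsplit : e = S * 2 ^ i * 2 ^ (j - i) := by
            rw [he_def, mul_assoc, ← pow_add]; congr 2; omega
          rw [hsplit, pow_mul, h2]
          exact ((Nat.even_pow).mpr ⟨even_two, by omega⟩).neg_one_pow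
        · right; rw [he_def, ← hij]; exact h2
        · exact absurd ⟨y, h2⟩ (hjmax i hij hi)
    obtain ⟨a, ha⟩ := hjspec
    have hua : IsUnit a := by
      have : IsUnit (a ^ e) := by rw [ha]; exact (isUnit_one).neg
      exact (isUnit_pow_iff (by positivity)).mp this
    have hcastval : ((a.val : ℕ) : ZMod P) = a := by
      rw [ZMod.natCast_val, ZMod.cast_id]
    obtain ⟨k, hkp, hkQ⟩ := Nat.chineseRemainder cop a.val 1
    set t : ZMod P := (k : ZMod P) with ht_def
    have hpP : p ∣ P := hpdvd
    have hQP : Q ∣ P := ⟨p, by rw [hPQ]; ring⟩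
    set φp := ZMod.castHom hpP (ZMod p) with hφp
    set φQ := ZMod.castHom hQP (ZMod Q) with hφQ
    have hφpt : φp t = (a.val : ZMod p) := by
      rw [ht_def, map_natCast]
      exact (ZMod.natCast_eq_natCast_iff _ _ _).mpr hkp
    have hφQt : φQ t = 1 := by
      rw [ht_def, map_natCast]
      have := (ZMod.natCast_eq_natCast_iff k 1 Q).mpr hkQ
      simpa using this
    have hφpa : (a.val : ZMod p) = φp a := by
      conv_rhs => rw [← hcastval]
      rw [map_natCast]
    -- t is a unit
    have htu : IsUnit t := by
      rw [ht_def, ZMod.isUnit_iff_coprime, hPQ]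
      apply Nat.Coprime.mul_right
      · rw [← ZMod.isUnit_iff_coprime]
        have hk' : ((k : ℕ) : ZMod p) = φp t := by rw [ht_def, map_natCast]
        rw [hk', hφpt, hφpa]
        exact hua.map φp
      · rw [← ZMod.isUnit_iff_coprime]
        have hk' : ((k : ℕ) : ZMod Q) = φQ t := by rw [ht_def, map_natCast]
        rw [hk', hφQt]
        exact isUnit_one
    -- key values of t^e under projections
    have hφpte : φp (t ^ e) = -1 := by
      rw [map_pow, hφpt, hφpa, ← map_pow, ha, map_neg, map_one]
    have hφQte : φQ (t ^ e) = 1 := by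
      rw [map_pow, hφQt, one_pow]
    have hte1 : t ^ e ≠ 1 := by
      intro hcon
      have := hφpte
      rw [hcon, map_one] at this
      exact neg_one_ne_one_zmod p (by omega) this.symm
    have hteneg : t ^ e ≠ -1 := by
      intro hcon
      have := hφQte
      rw [hcon, map_neg, map_one] at this
      exact neg_one_ne_one_zmod Q (by omega) this
    refine ⟨t, htu, ?_⟩
    rintro x hx hxt
    have h1 := hL3 x hx
    have h2 := hL3 _ hxt
    rw [mul_pow] at h2
    have hxx : x ^ e * x ^ e = 1 := by
      rcases h1 with h1 | h1 <;> rw [h1] <;> ring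
    have hte : t ^ e = x ^ e * (x ^ e * t ^ e) := by
      rw [← mul_assoc, hxx, one_mul]
    rcases h1 with h1 | h1 <;> rcases h2 with h2 | h2
    · exact hte1 (by rw [hte, h2, h1]; ring)
    · exact hteneg (by rw [hte, h2, h1]; ring)
    · exact hteneg (by rw [hte, h2, h1]; ring)
    · exact hte1 (by rw [hte, h2, h1]; ring)
  · -- non-squarefree case
    rw [Nat.squarefree_iff_prime_squarefree] at hsf
    push_neg at hsf
    obtain ⟨p, hpprime, hpp⟩ := hsf
    obtain ⟨m, hm⟩ := hpp
    have hp2 : 2 ≤ p := hpprime.two_le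
    have hm0 : m ≠ 0 := by rintro rfl; omega
    set c : ZMod P := ((p * m : ℕ) : ZMod P) with hc_def
    have hcc : c * c = 0 := by
      rw [hc_def, ← Nat.cast_mul]
      apply (ZMod.natCast_eq_zero_iff _ _).mpr
      exact ⟨m, by rw [hm]; ring⟩
    set t : ZMod P := 1 + c with ht_def
    have htp : t ^ p = 1 := by
      rw [ht_def, one_add_sq_zero_pow c hcc p, hc_def]
      have hz : (p : ZMod P) * ((p * m : ℕ) : ZMod P) = 0 := by
        rw [← Nat.cast_mul]
        exact (ZMod.natCast_eq_zero_iff _ _).mpr ⟨1, by rw [hm]; ring⟩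
      rw [hz, add_zero]
    have htu : IsUnit t := by
      apply IsUnit.of_mul_eq_one (a := t) (t ^ (p - 1))
      have hstep : t * t ^ (p - 1) = t ^ p := by
        rw [← pow_succ']
        congr 1
        omega
      rw [hstep, htp]
    have hcne : c ≠ 0 := by
      rw [hc_def]
      intro hcon
      have hdvd := (ZMod.natCast_eq_zero_iff _ _).mp hcon
      have h1 : 0 < p * m := by positivity
      have h2 : p * m < P := by
        calc p * m = 1 * (p * m) := (one_mul _).symm
          _ < p * (p * m) := (Nat.mul_lt_mul_right h1).mpr (by omega)
          _ = p * p * m := by ring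
          _ = P := hm.symm
      exact absurd (Nat.le_of_dvd h1 hdvd) (by omega)
    have htne1 : t ≠ 1 := by
      rw [ht_def]
      intro hcon
      apply hcne
      linear_combination hcon
    have hord : orderOf t = p := by
      have hdvd : orderOf t ∣ p := orderOf_dvd_of_pow_eq_one htp
      rcases (Nat.Prime.eq_one_or_self_of_dvd hpprime _ hdvd) with h1 | h1
      · exact absurd (orderOf_eq_one_iff.mp h1) htne1
      · exact h1
    have htP1 : t ^ (P - 1) ≠ 1 := by
      intro hcon
      have hdvd : p ∣ P - 1 := hord ▸ orderOf_dvd_of_pow_eq_one hcon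
      have hdvdP : p ∣ P := ⟨p * m, by rw [hm]; ring⟩
      have : p ∣ P - (P - 1) := Nat.dvd_sub hdvdP hdvd
      rw [show P - (P - 1) = 1 by omega] at this
      exact absurd (Nat.le_of_dvd one_pos this) (by omega)
    refine ⟨t, htu, ?_⟩
    rintro x hx hxt
    have h1 := hL2 x hx
    have h2 := hL2 _ hxt
    rw [mul_pow, ← hfact] at h2
    rw [← hfact] at h1
    rw [h1, one_mul] at h2
    exact htP1 h2
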